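/- arXiv:1612.00087 — 2 statements merged into one kernel-verified Lean document; each statement's English description precedes it below -/
import Mathlib

section
/- For real x with 0 < x < 1 and T > 0, the truncated Perron integral (1/(2πi)) ∫_{2-iT}^{2+iT} x^s/s ds is O(x^2/(T·log(1/x))). -/
open Complex intervalIntegral Filter Set
open scoped Interval

lemma rpow_integral (x : ℝ) (hx0 : 0 < x) (hx1 : x < 1) (a b : ℝ) :
    ∫ u in a..b, x ^ u = (x ^ b - x ^ a) / Real.log x := by
  have hL : Real.log x < 0 := Real.log_neg hx0 hx1
  have hxu : ∀ v : ℝ, x ^ v = Real.exp (Real.log x * v) := fun v => Real.rpow_def_of_pos hx0 v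
  have key : ∀ u : ℝ, HasDerivAt (fun v : ℝ => x ^ v / Real.log x) (x ^ u) u := by
    intro u
    have h1 : HasDerivAt (fun v : ℝ => Real.exp (Real.log x * v))
        (Real.exp (Real.log x * u) * Real.log x) u := by
      simpa [mul_comm] using ((hasDerivAt_id u).const_mul (Real.log x)).exp
    have h2 : HasDerivAt (fun v : ℝ => Real.exp (Real.log x * v) / Real.log x)
        (Real.exp (Real.log x * u)) u := by
      simpa [mul_div_assoc, mul_div_cancel_right₀ _ hL.ne] using h1.div_const (Real.log x)
    simp only [hxu]
    exact h2
  rw [intervalIntegral.integral_eq_sub_of_hasDerivAt (fun u _ => key u)]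
  · ring
  · apply Continuous.intervalIntegrable
    have : (fun u : ℝ => x ^ u) = fun u : ℝ => Real.exp (Real.log x * u) := funext hxu
    show Continuous fun u : ℝ => x ^ u
    rw [this]; fun_prop

theorem perron_key (x T : ℝ) (hx0 : 0 < x) (hx1 : x < 1) (hT : 0 < T) :
    ‖∫ t in (-T)..T, (x : ℂ) ^ ((2 : ℂ) + t * Complex.I) / ((2 : ℂ) + t * Complex.I)‖
      ≤ 2 * (x ^ 2 / (T * Real.log x⁻¹)) := by
  have hL : Real.log x < 0 := Real.log_neg hx0 hx1
  have hlog : Real.log x⁻¹ = -Real.log x := Real.log_inv x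
  set f : ℂ → ℂ := fun s => (x : ℂ) ^ s / s with hf
  have hx0' : (x : ℂ) ≠ 0 := by exact_mod_cast hx0.ne'
  have hint : (∫ t in (-T)..T, (x : ℂ) ^ ((2 : ℂ) + t * Complex.I) / ((2 : ℂ) + t * Complex.I))
      = ∫ t in (-T)..T, f (((2:ℝ):ℂ) + t * Complex.I) := by
    norm_num [hf]
  rw [hint]
  -- pointwise norm of f
  have hfnorm : ∀ s : ℂ, ‖f s‖ = x ^ s.re / ‖s‖ := by
    intro s
    rw [hf]
    simp only [norm_div, Complex.norm_cpow_eq_rpow_re_of_pos hx0]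
  have hx2 : x ^ (2:ℝ) = x ^ 2 := by
    rw [show (2:ℝ) = ((2:ℕ):ℝ) by norm_num, Real.rpow_natCast]
  -- main estimate for each σ ≥ 2
  have main : ∀ σ : ℝ, 2 ≤ σ →
      ‖∫ t in (-T)..T, f (((2:ℝ):ℂ) + t * Complex.I)‖
        ≤ 2 * (x ^ 2 / (T * Real.log x⁻¹)) + 2 * T * (x ^ σ / 2) := by
    intro σ hσ
    have hdiff : DifferentiableOn ℂ f ([[((⟨2, -T⟩:ℂ)).re, ((⟨σ, T⟩:ℂ)).re]] ×ℂ
        [[((⟨2, -T⟩:ℂ)).im, ((⟨σ, T⟩:ℂ)).im]]) := by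
      apply DifferentiableOn.div
      · exact fun s _ =>
          (differentiable_id.const_cpow (Or.inl hx0') s).differentiableWithinAt
      · exact differentiableOn_id
      · intro s hs
        rw [Complex.mem_reProdIm] at hs
        have h1 := hs.1
        rw [Set.uIcc_of_le (show ((⟨2, -T⟩:ℂ)).re ≤ ((⟨σ, T⟩:ℂ)).re from hσ)] at h1
        have h2 : (2:ℝ) ≤ s.re := h1.1
        intro h0
        rw [h0] at h2; norm_num at h2
    have rect := Complex.integral_boundary_rect_eq_zero_of_differentiableOn f ⟨2, -T⟩ ⟨σ, T⟩ hdiff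
    set Bot := ∫ u in (2:ℝ)..σ, f ((u:ℂ) + (-T : ℝ) * Complex.I) with hBot
    set Top := ∫ u in (2:ℝ)..σ, f ((u:ℂ) + (T : ℝ) * Complex.I) with hTop
    set Aσ := ∫ y in (-T)..T, f ((σ:ℝ) + (y:ℂ) * Complex.I) with hAσ
    set A2 := ∫ y in (-T)..T, f (((2:ℝ):ℂ) + (y:ℂ) * Complex.I) with hA2
    have rect' : Complex.I * A2 = Bot - Top + Complex.I * Aσ := by
      simp only [smul_eq_mul] at rect
      exact (sub_eq_zero.mp rect).symm
    have hnorm : ‖A2‖ = ‖Complex.I * A2‖ := by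
      rw [norm_mul, Complex.norm_I, one_mul]
    -- bound on horizontal integrals
    have bd : ∀ (c : ℝ), |c| = T →
        ‖∫ u in (2:ℝ)..σ, f ((u:ℂ) + (c : ℝ) * Complex.I)‖ ≤ x ^ 2 / (T * Real.log x⁻¹) := by
      intro c hc
      have step : ‖∫ u in (2:ℝ)..σ, f ((u:ℂ) + (c : ℝ) * Complex.I)‖
          ≤ |∫ u in (2:ℝ)..σ, x ^ u / T| := by
        apply intervalIntegral.norm_integral_le_abs_of_norm_le
        · filter_upwards with u
          have habs : ((u:ℂ) + c * Complex.I).re = u := by simp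
          have hden : T ≤ ‖(u:ℂ) + c * Complex.I‖ := by
            have him : ((u:ℂ) + c * Complex.I).im = c := by simp
            calc T = |((u:ℂ) + c * Complex.I).im| := by rw [him, hc]
            _ ≤ ‖_‖ := Complex.abs_im_le_norm _
          rw [hfnorm, habs]
          gcongr
        · apply Continuous.intervalIntegrable
          have h1 : (fun u : ℝ => x ^ u) = fun u : ℝ => Real.exp (Real.log x * u) :=
            funext fun v => Real.rpow_def_of_pos hx0 v
          have : Continuous fun u : ℝ => x ^ u := by rw [h1]; fun_prop
          fun_prop
      have calc2 : (∫ u in (2:ℝ)..σ, x ^ u / T) = (x ^ (2:ℝ) - x ^ σ) / (T * (-Real.log x)) := by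
        rw [intervalIntegral.integral_div, rpow_integral x hx0 hx1]
        field_simp
        ring
      refine step.trans ?_
      rw [calc2]
      have hxσ0 : 0 ≤ x ^ σ := Real.rpow_nonneg hx0.le σ
      have hxσ : x ^ σ ≤ x ^ (2:ℝ) := Real.rpow_le_rpow_of_exponent_ge hx0 hx1.le hσ
      have hpos : 0 < T * (-Real.log x) := mul_pos hT (by linarith)
      rw [_root_.abs_of_nonneg (div_nonneg (by linarith) hpos.le), hlog, ← hx2]
      gcongr
      linarith
    -- bound on right vertical integral
    have bdσ : ‖Aσ‖ ≤ x ^ σ / 2 * |T - (-T)| := by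
      rw [hAσ]
      apply intervalIntegral.norm_integral_le_of_norm_le_const
      intro y _
      have habs : (((σ:ℝ):ℂ) + y * Complex.I).re = σ := by simp
      have hden : (2:ℝ) ≤ ‖((σ:ℝ):ℂ) + y * Complex.I‖ := by
        calc (2:ℝ) ≤ σ := hσ
        _ = |(((σ:ℝ):ℂ) + y * Complex.I).re| := by rw [habs]; exact (_root_.abs_of_pos (by linarith)).symm
        _ ≤ ‖_‖ := Complex.abs_re_le_norm _
      rw [hfnorm, habs]
      gcongr
    have habsT : |T - (-T)| = 2 * T := by rw [_root_.abs_of_pos (by linarith)]; ring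
    calc ‖A2‖ = ‖Bot - Top + Complex.I * Aσ‖ := by rw [hnorm, rect']
    _ ≤ ‖Bot‖ + ‖Top‖ + ‖Complex.I * Aσ‖ := by
        refine (norm_add_le _ _).trans ?_
        gcongr
        exact norm_sub_le _ _
    _ ≤ x ^ 2 / (T * Real.log x⁻¹) + x ^ 2 / (T * Real.log x⁻¹) + x ^ σ / 2 * (2 * T) := by
        gcongr ?_ + ?_ + ?_
        · exact bd (-T) (by rw [abs_neg, _root_.abs_of_pos hT])
        · exact bd T (_root_.abs_of_pos hT)
        · rw [norm_mul, Complex.norm_I, one_mul]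
          exact bdσ.trans_eq (by rw [habsT])
    _ = 2 * (x ^ 2 / (T * Real.log x⁻¹)) + 2 * T * (x ^ σ / 2) := by ring
  -- take the limit σ → ∞
  have hlim : Tendsto (fun σ : ℝ => 2 * (x ^ 2 / (T * Real.log x⁻¹)) + 2 * T * (x ^ σ / 2))
      atTop (nhds (2 * (x ^ 2 / (T * Real.log x⁻¹)) + 2 * T * (0 / 2))) := by
    apply Tendsto.const_add
    apply Tendsto.const_mul
    exact (tendsto_rpow_atTop_of_base_lt_one x (by linarith) hx1).div_const 2
  have := ge_of_tendsto hlim (eventually_atTop.2 ⟨2, fun σ hσ => main σ hσ⟩)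
  simpa using this

/-- For `0 < x < 1` and `T > 0`, the truncated Perron integral
`(1/(2πi)) ∫_{2-iT}^{2+iT} x^s/s ds` is `O(x²/(T·log(1/x)))`,
with an absolute implied constant. -/
theorem perron_integral_lt_one :
    ∃ C : ℝ, 0 < C ∧ ∀ x T : ℝ, 0 < x → x < 1 → 0 < T →
      ‖(1 / (2 * Real.pi * Complex.I)) *
          (Complex.I * ∫ t in (-T)..T,
            (x : ℂ) ^ ((2 : ℂ) + t * Complex.I) / ((2 : ℂ) + t * Complex.I))‖
        ≤ C * (x ^ 2 / (T * Real.log x⁻¹)) := by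
  refine ⟨1, one_pos, fun x T hx0 hx1 hT => ?_⟩
  have key := perron_key x T hx0 hx1 hT
  set A := ∫ t in (-T)..T, (x : ℂ) ^ ((2 : ℂ) + t * Complex.I) / ((2 : ℂ) + t * Complex.I)
  have hpi : (0:ℝ) < Real.pi := Real.pi_pos
  have hpre : ‖(1 / (2 * (Real.pi:ℂ) * Complex.I))‖ = 1 / (2 * Real.pi) := by
    simp [norm_div, norm_mul, Complex.norm_I, Complex.norm_real, _root_.abs_of_pos hpi]
  have hc : 0 ≤ x ^ 2 / (T * Real.log x⁻¹) := by
    apply div_nonneg (by positivity)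
    have hlogpos : 0 ≤ Real.log x⁻¹ := Real.log_nonneg (one_le_inv_iff₀.mpr ⟨hx0, hx1.le⟩)
    positivity
  calc ‖(1 / (2 * (Real.pi:ℂ) * Complex.I)) * (Complex.I * A)‖
      = (1 / (2 * Real.pi)) * ‖A‖ := by
        rw [norm_mul, norm_mul, Complex.norm_I, one_mul, hpre]
    _ ≤ (1 / (2 * Real.pi)) * (2 * (x ^ 2 / (T * Real.log x⁻¹))) := by
        gcongr
    _ = (x ^ 2 / (T * Real.log x⁻¹)) / Real.pi := by field_simp
    _ ≤ 1 * (x ^ 2 / (T * Real.log x⁻¹)) := by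
        rw [one_mul]
        exact div_le_self hc (by linarith [Real.pi_gt_three])
end

section
/- Let K be a number field. If j_K(x) − j_K(x−1) = O(x^{1/2+ε}) for all ε > 0, then the tail of the Möbius Dirichlet series satisfies ∑_{N𝔞 > x} μ(𝔞)/N𝔞^m = O(x^{3/2+ε−m}) for every integer m ≥ 2 and every ε > 0. -/
open NumberField Ideal Filter Asymptotics UniqueFactorizationMonoid

/-- The ideal-counting function: the number of nonzero ideals of `𝓞 K` of norm at most `x`. -/
noncomputable def idealCount (K : Type*) [Field K] [NumberField K] (x : ℝ) : ℕ :=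
  Nat.card {I : Ideal (𝓞 K) // I ≠ ⊥ ∧ (Ideal.absNorm I : ℝ) ≤ x}

open Classical in
/-- The Möbius function on nonzero ideals of the ring of integers. -/
noncomputable def idealMoebius (K : Type*) [Field K] [NumberField K] (I : Ideal (𝓞 K)) : ℤ :=
  if Squarefree I then (-1) ^ (normalizedFactors I).card else 0

open Classical in
/-- The tail `∑_{N𝔞 > x} μ(𝔞)/N𝔞^m` of the Möbius Dirichlet series. -/
noncomputable def moebiusTail (K : Type*) [Field K] [NumberField K] (m : ℕ) (x : ℝ) : ℝ :=
  ∑' I : {I : Ideal (𝓞 K) // I ≠ ⊥},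
    if x < (Ideal.absNorm (I : Ideal (𝓞 K)) : ℝ) then
      (idealMoebius K (I : Ideal (𝓞 K)) : ℝ) / (Ideal.absNorm (I : Ideal (𝓞 K)) : ℝ) ^ (m : ℝ)
    else 0

/-- Number of ideals of norm exactly `n`. -/
noncomputable def aCount (K : Type*) [Field K] [NumberField K] (n : ℕ) : ℕ :=
  Nat.card {I : Ideal (𝓞 K) // Ideal.absNorm I = n}

lemma idealCount_step (K : Type*) [Field K] [NumberField K] (n : ℕ) (hn : 1 ≤ n) :
    idealCount K (n : ℝ) = idealCount K ((n : ℝ) - 1) + aCount K n := by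
  classical
  have e1 : idealCount K (n : ℝ) = {I : Ideal (𝓞 K) | I ≠ ⊥ ∧ absNorm I ≤ n}.ncard := by
    rw [idealCount, ← Nat.card_coe_set_eq]
    exact Nat.card_congr (Equiv.subtypeEquivRight fun I => by
      simp only [Set.mem_setOf_eq, Nat.cast_le])
  have e2 : idealCount K ((n : ℝ) - 1)
      = {I : Ideal (𝓞 K) | I ≠ ⊥ ∧ absNorm I ≤ n - 1}.ncard := by
    rw [idealCount, ← Nat.card_coe_set_eq]
    refine Nat.card_congr (Equiv.subtypeEquivRight fun I => ?_)
    have : ((n : ℝ) - 1) = ((n - 1 : ℕ) : ℝ) := by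
      rw [Nat.cast_sub hn]; norm_num
    simp only [Set.mem_setOf_eq, this, Nat.cast_le]
  have e3 : aCount K n = {I : Ideal (𝓞 K) | absNorm I = n}.ncard := by
    rw [← Nat.card_coe_set_eq]
    rfl
  have key : {I : Ideal (𝓞 K) | I ≠ ⊥ ∧ absNorm I ≤ n}
      = {I : Ideal (𝓞 K) | I ≠ ⊥ ∧ absNorm I ≤ n - 1} ∪ {I : Ideal (𝓞 K) | absNorm I = n} := by
    ext I
    simp only [Set.mem_setOf_eq, Set.mem_union]
    constructor
    · rintro ⟨hb, hle⟩
      rcases Nat.lt_or_ge (absNorm I) n with h | h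
      · exact Or.inl ⟨hb, by omega⟩
      · exact Or.inr (by omega)
    · rintro (⟨hb, hle⟩ | h)
      · exact ⟨hb, by omega⟩
      · refine ⟨?_, h.le⟩
        intro hbot
        rw [hbot, absNorm_eq_zero_iff.mpr rfl] at h
        omega
  have hdisj : Disjoint {I : Ideal (𝓞 K) | I ≠ ⊥ ∧ absNorm I ≤ n - 1}
      {I : Ideal (𝓞 K) | absNorm I = n} := by
    rw [Set.disjoint_left]
    rintro I ⟨_, h1⟩ h2
    simp only [Set.mem_setOf_eq] at h1 h2
    omega
  have hf1 : {I : Ideal (𝓞 K) | I ≠ ⊥ ∧ absNorm I ≤ n - 1}.Finite :=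
    (Ideal.finite_setOf_absNorm_le (n-1)).subset fun I hI => hI.2
  have hf2 : {I : Ideal (𝓞 K) | absNorm I = n}.Finite := Ideal.finite_setOf_absNorm_eq n
  rw [e1, e2, e3, key, Set.ncard_union_eq hdisj hf1 hf2]

lemma aCount_bound (K : Type*) [Field K] [NumberField K] (ε : ℝ) (hε : 0 < ε)
    (hj : (fun x : ℝ => (idealCount K x : ℝ) - (idealCount K (x - 1) : ℝ))
      =O[atTop] fun x => x ^ (1 / 2 + ε)) :
    ∃ C : ℝ, 0 < C ∧ ∀ n : ℕ, 1 ≤ n → (aCount K n : ℝ) ≤ C * (n : ℝ) ^ (1 / 2 + ε) := by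
  have hj' := hj.comp_tendsto tendsto_natCast_atTop_atTop
  rw [isBigO_iff] at hj'
  obtain ⟨C, hC⟩ := hj'
  rw [eventually_atTop] at hC
  obtain ⟨N, hN⟩ := hC
  set N₁ := max N 1 with hN₁
  set C₂ : ℝ := ∑ k ∈ Finset.range N₁, (aCount K k : ℝ) with hC₂
  have hC₂0 : 0 ≤ C₂ := Finset.sum_nonneg fun _ _ => by positivity
  refine ⟨max C C₂ + 1, by positivity, fun n hn => ?_⟩
  have hnp : (0:ℝ) ≤ (n : ℝ) ^ (1 / 2 + ε) := Real.rpow_nonneg (by positivity) _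
  have hnp1 : (1:ℝ) ≤ (n : ℝ) ^ (1 / 2 + ε) :=
    Real.one_le_rpow (by exact_mod_cast hn) (by positivity)
  rcases le_or_gt N₁ n with h | h
  · have h1 := hN n (le_trans (le_max_left _ _) h)
    have h2 : (aCount K n : ℝ) = (idealCount K (n:ℝ) : ℝ) - (idealCount K ((n:ℝ) - 1) : ℝ) := by
      have := idealCount_step K n hn
      have : (idealCount K (n:ℝ) : ℝ) = (idealCount K ((n:ℝ) - 1) : ℝ) + (aCount K n : ℝ) := by
        exact_mod_cast congrArg (Nat.cast : ℕ → ℝ) this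
      linarith
    simp only [Function.comp] at h1
    rw [Real.norm_eq_abs, Real.norm_eq_abs] at h1
    have h3 : (aCount K n : ℝ) ≤ C * |(n : ℝ) ^ (1 / 2 + ε)| := by
      rw [h2]
      exact le_trans (le_abs_self _) h1
    rw [abs_of_nonneg hnp] at h3
    refine h3.trans (mul_le_mul_of_nonneg_right ?_ hnp)
    calc C ≤ max C C₂ := le_max_left _ _
    _ ≤ max C C₂ + 1 := by linarith
  · have h4 : (aCount K n : ℝ) ≤ C₂ := by
      refine Finset.single_le_sum (f := fun k => (aCount K k : ℝ)) (fun _ _ => by positivity) ?_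
      exact Finset.mem_range.mpr h
    calc (aCount K n : ℝ) ≤ C₂ := h4
    _ ≤ C₂ * (n : ℝ) ^ (1 / 2 + ε) := le_mul_of_one_le_right hC₂0 hnp1
    _ ≤ (max C C₂ + 1) * (n : ℝ) ^ (1 / 2 + ε) := by
        refine mul_le_mul_of_nonneg_right ?_ hnp
        calc C₂ ≤ max C C₂ := le_max_right _ _
        _ ≤ max C C₂ + 1 := by linarith

lemma summable_aux (K : Type*) [Field K] [NumberField K] (s q C : ℝ) (hC : 0 < C)
    (hb : ∀ n : ℕ, 1 ≤ n → (aCount K n : ℝ) ≤ C * (n : ℝ) ^ q)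
    (hs : 1 < s - q) :
    Summable (fun I : {I : Ideal (𝓞 K) // I ≠ ⊥} => 1 / (absNorm I.1 : ℝ) ^ s) := by
  classical
  have hsum0 : Summable (fun n : ℕ => 1 / (n : ℝ) ^ (s - q)) :=
    Real.summable_one_div_nat_rpow.mpr hs
  refine summable_of_sum_le (c := C * ∑' n : ℕ, 1 / (n : ℝ) ^ (s - q))
    (fun I => by positivity) (fun u => ?_)
  set g : {I : Ideal (𝓞 K) // I ≠ ⊥} → ℕ := fun I => absNorm I.1 with hg
  have hcomp : ∑ I ∈ u, 1 / (absNorm I.1 : ℝ) ^ s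
      = ∑ n ∈ u.image g, (Finset.filter (fun I => g I = n) u).card • (1 / (n : ℝ) ^ s) := by
    exact Finset.sum_comp (fun n : ℕ => 1 / (n : ℝ) ^ s) g
  rw [hcomp]
  have hone : ∀ n ∈ u.image g, 1 ≤ n := by
    intro n hn
    obtain ⟨I, _, hI⟩ := Finset.mem_image.mp hn
    rw [← hI]
    exact Nat.one_le_iff_ne_zero.mpr fun h => I.2 (absNorm_eq_zero_iff.mp h)
  have hcard : ∀ n, ((Finset.filter (fun I => g I = n) u).card ≤ aCount K n) := by
    intro n
    have hfin := Ideal.finite_setOf_absNorm_eq (S := 𝓞 K) n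
    have e : aCount K n = hfin.toFinset.card := by
      rw [aCount, ← Set.ncard_eq_toFinset_card _ hfin, ← Nat.card_coe_set_eq]
      rfl
    rw [e]
    refine Finset.card_le_card_of_injOn (fun I => I.1) ?_ ?_
    · intro I hI
      rw [Finset.mem_coe, Set.Finite.mem_toFinset]
      exact (Finset.mem_filter.mp hI).2
    · intro I _ J _ h
      exact Subtype.ext h
  have hterm : ∀ n ∈ u.image g,
      (Finset.filter (fun I => g I = n) u).card • (1 / (n : ℝ) ^ s)
        ≤ C * (1 / (n : ℝ) ^ (s - q)) := by
    intro n hn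
    have hn1 := hone n hn
    have hnpos : (0:ℝ) < (n : ℝ) := by exact_mod_cast hn1
    rw [nsmul_eq_mul]
    have h1 : ((Finset.filter (fun I => g I = n) u).card : ℝ) ≤ C * (n : ℝ) ^ q :=
      le_trans (by exact_mod_cast hcard n) (hb n hn1)
    have h2 : (n : ℝ) ^ q * (1 / (n : ℝ) ^ s) = 1 / (n : ℝ) ^ (s - q) := by
      rw [Real.rpow_sub hnpos, one_div_div]
      ring
    calc ((Finset.filter (fun I => g I = n) u).card : ℝ) * (1 / (n : ℝ) ^ s)
        ≤ C * (n : ℝ) ^ q * (1 / (n : ℝ) ^ s) := by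
          exact mul_le_mul_of_nonneg_right h1 (by positivity)
    _ = C * (1 / (n : ℝ) ^ (s - q)) := by rw [mul_assoc, h2]
  calc ∑ n ∈ u.image g, (Finset.filter (fun I => g I = n) u).card • (1 / (n : ℝ) ^ s)
      ≤ ∑ n ∈ u.image g, C * (1 / (n : ℝ) ^ (s - q)) := Finset.sum_le_sum hterm
  _ = C * ∑ n ∈ u.image g, 1 / (n : ℝ) ^ (s - q) := by rw [Finset.mul_sum]
  _ ≤ C * ∑' n : ℕ, 1 / (n : ℝ) ^ (s - q) := by
      refine mul_le_mul_of_nonneg_left ?_ hC.le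
      exact Summable.sum_le_tsum _ (fun n _ => by positivity) hsum0

lemma abs_idealMoebius_le (K : Type*) [Field K] [NumberField K] (I : Ideal (𝓞 K)) :
    |(idealMoebius K I : ℝ)| ≤ 1 := by
  rw [idealMoebius]
  split
  · push_cast
    rw [abs_pow, abs_neg, abs_one, one_pow]
  · simp

/-- If `j_K(x) − j_K(x−1) = O(x^{1/2+ε})` for all `ε > 0`, then
`∑_{N𝔞 > x} μ(𝔞)/N𝔞^m = O(x^{3/2+ε−m})` for every `m ≥ 2` and every `ε > 0`. -/
theorem moebiusTail_isBigO (K : Type*) [Field K] [NumberField K]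
    (hj : ∀ ε : ℝ, 0 < ε →
      (fun x : ℝ => (idealCount K x : ℝ) - (idealCount K (x - 1) : ℝ))
        =O[atTop] fun x => x ^ (1 / 2 + ε)) :
    ∀ m : ℕ, 2 ≤ m → ∀ ε : ℝ, 0 < ε →
      (fun x : ℝ => moebiusTail K m x) =O[atTop] fun x => x ^ (3 / 2 + ε - (m : ℝ)) := by
  classical
  intro m hm ε hε
  set ε₀ : ℝ := min ε (1/4) with hε₀def
  have hε₀ : 0 < ε₀ := lt_min hε (by norm_num)
  obtain ⟨C, hC, hb⟩ := aCount_bound K (ε₀/2) (by positivity) (hj _ (by positivity))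
  set s : ℝ := 3/2 + ε₀ with hsdef
  have hsum : Summable (fun I : {I : Ideal (𝓞 K) // I ≠ ⊥} => 1 / (absNorm I.1 : ℝ) ^ s) :=
    summable_aux K s (1/2 + ε₀/2) C hC hb (by rw [hsdef]; linarith)
  set Z : ℝ := ∑' I : {I : Ideal (𝓞 K) // I ≠ ⊥}, 1 / (absNorm I.1 : ℝ) ^ s with hZdef
  have hZ0 : 0 ≤ Z := tsum_nonneg (fun I => by positivity)
  rw [isBigO_iff]
  refine ⟨Z, ?_⟩
  filter_upwards [eventually_ge_atTop (1:ℝ)] with x hx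
  have hx0 : (0:ℝ) < x := lt_of_lt_of_le one_pos hx
  have hsm : s - (m:ℝ) ≤ 0 := by
    have h1 : ε₀ ≤ 1/4 := min_le_right _ _
    have h2 : (2:ℝ) ≤ (m:ℝ) := by exact_mod_cast hm
    rw [hsdef]; linarith
  have hbound : ∀ I : {I : Ideal (𝓞 K) // I ≠ ⊥},
      ‖(if x < (Ideal.absNorm (I : Ideal (𝓞 K)) : ℝ) then
          (idealMoebius K (I : Ideal (𝓞 K)) : ℝ) /
            (Ideal.absNorm (I : Ideal (𝓞 K)) : ℝ) ^ (m : ℝ)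
        else 0)‖ ≤ x ^ (s - (m:ℝ)) * (1 / (absNorm I.1 : ℝ) ^ s) := by
    intro I
    have hNne : absNorm I.1 ≠ 0 := fun h => I.2 (absNorm_eq_zero_iff.mp h)
    have hNpos : (0:ℝ) < (absNorm I.1 : ℝ) := by
      exact_mod_cast Nat.pos_of_ne_zero hNne
    split
    case isTrue h =>
      rw [Real.norm_eq_abs, abs_div, abs_of_nonneg (Real.rpow_nonneg hNpos.le _)]
      have h2 : |(idealMoebius K I.1 : ℝ)| / (absNorm I.1 : ℝ) ^ (m:ℝ)
          ≤ 1 / (absNorm I.1 : ℝ) ^ (m:ℝ) := by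
        gcongr
        exact abs_idealMoebius_le K I.1
      refine h2.trans ?_
      have key : (absNorm I.1 : ℝ) ^ (s - (m:ℝ)) * (1 / (absNorm I.1 : ℝ) ^ s)
          = 1 / (absNorm I.1 : ℝ) ^ (m:ℝ) := by
        rw [one_div, one_div, ← Real.rpow_neg hNpos.le, ← Real.rpow_neg hNpos.le,
          ← Real.rpow_add hNpos]
        congr 1
        ring
      rw [← key]
      refine mul_le_mul_of_nonneg_right ?_ (by positivity)
      exact Real.rpow_le_rpow_of_nonpos hx0 h.le hsm
    case isFalse h =>
      rw [norm_zero]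
      positivity
  have hnormsum : Summable (fun I : {I : Ideal (𝓞 K) // I ≠ ⊥} =>
      ‖(if x < (Ideal.absNorm (I : Ideal (𝓞 K)) : ℝ) then
          (idealMoebius K (I : Ideal (𝓞 K)) : ℝ) /
            (Ideal.absNorm (I : Ideal (𝓞 K)) : ℝ) ^ (m : ℝ)
        else 0)‖) :=
    Summable.of_nonneg_of_le (fun I => norm_nonneg _) hbound (hsum.mul_left _)
  calc ‖moebiusTail K m x‖
      = ‖∑' I : {I : Ideal (𝓞 K) // I ≠ ⊥},
        if x < (Ideal.absNorm (I : Ideal (𝓞 K)) : ℝ) then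
          (idealMoebius K (I : Ideal (𝓞 K)) : ℝ) /
            (Ideal.absNorm (I : Ideal (𝓞 K)) : ℝ) ^ (m : ℝ)
        else 0‖ := rfl
  _ ≤ ∑' I : {I : Ideal (𝓞 K) // I ≠ ⊥},
        ‖(if x < (Ideal.absNorm (I : Ideal (𝓞 K)) : ℝ) then
          (idealMoebius K (I : Ideal (𝓞 K)) : ℝ) /
            (Ideal.absNorm (I : Ideal (𝓞 K)) : ℝ) ^ (m : ℝ)
        else 0)‖ := norm_tsum_le_tsum_norm hnormsum
  _ ≤ ∑' I : {I : Ideal (𝓞 K) // I ≠ ⊥}, x ^ (s - (m:ℝ)) * (1 / (absNorm I.1 : ℝ) ^ s) :=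
      hnormsum.tsum_le_tsum hbound (hsum.mul_left _)
  _ = x ^ (s - (m:ℝ)) * Z := tsum_mul_left
  _ ≤ x ^ (3/2 + ε - (m:ℝ)) * Z := by
      refine mul_le_mul_of_nonneg_right ?_ hZ0
      refine Real.rpow_le_rpow_of_exponent_le hx ?_
      have : ε₀ ≤ ε := min_le_left _ _
      rw [hsdef]; linarith
  _ ≤ Z * ‖x ^ (3/2 + ε - (m:ℝ))‖ := by
      rw [Real.norm_of_nonneg (Real.rpow_nonneg hx0.le _)]
      ring_nf
      exact le_refl _
end
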